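/- Let λ ≠ 0, k ≠ 0 be real constants and fix ε ∈ ℝ. If φ : ℝ × ℝ → ℝ is a positive differentiable solution of u_t + u^k·u_x + λ·u = 0 on ℝ², then the function ψ(x,t) = (φ(x − (ε/(λk))e^{−λ k t}, t)^k − ε e^{−λ k t})^{1/k} satisfies the same equation at every point (x,t) where φ(x − (ε/(λk))e^{−λ k t}, t)^k − ε e^{−λ k t} > 0. -/

import Mathlib

open Real

set_option maxHeartbeats 1000000 in
/-- case m = 1. If φ is a positive differentiable solution of
`u_t + u^k·u_x + λ·u = 0` on ℝ², then
`ψ(x,t) = (φ(x − (ε/(λk))e^{−λkt}, t)^k − ε e^{−λkt})^{1/k}` satisfies the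
same equation at every point where `φ(x − (ε/(λk))e^{−λkt}, t)^k − ε e^{−λkt} > 0`. -/
theorem case7_G5_transformation
    (lam k : ℝ) (hlam : lam ≠ 0) (hk : k ≠ 0) (ε : ℝ)
    (φ : ℝ × ℝ → ℝ)
    (hφ : Differentiable ℝ φ)
    (hpos : ∀ x t : ℝ, 0 < φ (x, t))
    (hsol : ∀ x t : ℝ,
      fderiv ℝ φ (x, t) (0, 1) + φ (x, t) ^ k * fderiv ℝ φ (x, t) (1, 0)
        + lam * φ (x, t) = 0) :
    ∀ ψ : ℝ × ℝ → ℝ,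
      ψ = (fun p : ℝ × ℝ =>
        (φ (p.1 - (ε / (lam * k)) * exp (-(lam * k * p.2)), p.2) ^ k
          - ε * exp (-(lam * k * p.2))) ^ (1 / k)) →
      ∀ x t : ℝ,
        0 < φ (x - (ε / (lam * k)) * exp (-(lam * k * t)), t) ^ k
              - ε * exp (-(lam * k * t)) →
        DifferentiableAt ℝ ψ (x, t) ∧
        fderiv ℝ ψ (x, t) (0, 1) + ψ (x, t) ^ k * fderiv ℝ ψ (x, t) (1, 0)
          + lam * ψ (x, t) = 0 := by
  intro ψ hψ x t hF
  subst hψ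
  have hlk : lam * k ≠ 0 := mul_ne_zero hlam hk
  set c : ℝ := ε / (lam * k) with hc
  have hcε : c * (lam * k) = ε := div_mul_cancel₀ ε hlk
  set E : ℝ := Real.exp (-(lam * k * t)) with hE
  have hEpos : 0 < E := Real.exp_pos _
  set a : ℝ × ℝ := (x - c * E, t) with ha
  set P : ℝ := φ a with hPdef
  have hPpos : 0 < P := hpos _ _
  -- derivative of the exponential part
  have hexp : HasFDerivAt (fun p : ℝ × ℝ => Real.exp (-(lam * k * p.2)))
      ((-(lam * k) * E) • (ContinuousLinearMap.snd ℝ ℝ ℝ)) (x, t) := by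
    have h0 : HasDerivAt (fun s : ℝ => -(lam * k * s)) (-(lam * k)) t := by
      simpa [Pi.neg_def] using ((hasDerivAt_id t).const_mul (lam * k)).neg
    have h1 : HasDerivAt (fun s : ℝ => Real.exp (-(lam * k * s))) (-(lam * k) * E) t := by
      simpa [hE, mul_comm] using h0.exp
    exact h1.comp_hasFDerivAt (x, t) (hasFDerivAt_snd (𝕜 := ℝ) (p := (x, t)))
  -- inner coordinate change
  set Lσ : (ℝ × ℝ) →L[ℝ] (ℝ × ℝ) :=
    ((ContinuousLinearMap.fst ℝ ℝ ℝ) -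
      c • ((-(lam * k) * E) • (ContinuousLinearMap.snd ℝ ℝ ℝ))).prod
      (ContinuousLinearMap.snd ℝ ℝ ℝ) with hLσ
  have hσ : HasFDerivAt
      (fun p : ℝ × ℝ => ((p.1 - c * Real.exp (-(lam * k * p.2)), p.2) : ℝ × ℝ))
      Lσ (x, t) :=
    (hasFDerivAt_fst.sub (hexp.const_mul c)).prodMk hasFDerivAt_snd
  set Dφ : (ℝ × ℝ) →L[ℝ] ℝ := fderiv ℝ φ a with hDφ
  have hg : HasFDerivAt
      (fun p : ℝ × ℝ => φ (p.1 - c * Real.exp (-(lam * k * p.2)), p.2))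
      (Dφ.comp Lσ) (x, t) := by
    exact HasFDerivAt.comp (x, t) ((hφ a).hasFDerivAt) hσ
  set F : ℝ := P ^ k - ε * E with hFdef
  have hFne : F ≠ 0 := ne_of_gt hF
  set LF : (ℝ × ℝ) →L[ℝ] ℝ :=
    (k * P ^ (k - 1)) • (Dφ.comp Lσ) -
      ε • ((-(lam * k) * E) • (ContinuousLinearMap.snd ℝ ℝ ℝ)) with hLF
  have hFd : HasFDerivAt (fun p : ℝ × ℝ =>
      φ (p.1 - c * Real.exp (-(lam * k * p.2)), p.2) ^ k - ε * Real.exp (-(lam * k * p.2)))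
      LF (x, t) :=
    (hg.rpow_const (Or.inl hPpos.ne')).sub (hexp.const_mul ε)
  have hψd : HasFDerivAt (fun p : ℝ × ℝ =>
      (φ (p.1 - c * Real.exp (-(lam * k * p.2)), p.2) ^ k - ε * Real.exp (-(lam * k * p.2)))
        ^ (1 / k))
      ((1 / k * F ^ (1 / k - 1)) • LF) (x, t) :=
    hFd.rpow_const (Or.inl hFne)
  refine ⟨hψd.differentiableAt, ?_⟩
  rw [hψd.fderiv]
  have hA : Lσ (1, 0) = ((1 : ℝ), (0 : ℝ)) := by
    simp [hLσ]
  have hB : Lσ (0, 1) = ((ε * E : ℝ), (1 : ℝ)) := by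
    simp [hLσ, Prod.ext_iff]
    nlinarith [hcε]
  set A : ℝ := Dφ (1, 0) with hAdef
  set B : ℝ := Dφ (0, 1) with hBdef
  have hDφsplit : Dφ (ε * E, 1) = (ε * E) * A + B := by
    have : ((ε * E : ℝ), (1 : ℝ)) = (ε * E) • ((1 : ℝ), (0 : ℝ)) + ((0 : ℝ), (1 : ℝ)) := by
      simp [Prod.ext_iff]
    rw [this, map_add, map_smul, smul_eq_mul]
  have hsol' : B + P ^ k * A + lam * P = 0 := by
    have := hsol (x - c * E) t
    simpa [← ha, ← hDφ, ← hPdef, ← hAdef, ← hBdef] using this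
  -- the value of ψ at (x,t)
  have hval : φ (x - c * Real.exp (-(lam * k * t)), t) = P := by rw [← hE, ← ha]
  -- key rpow identities
  have hPk : P ^ (k - 1) * P = P ^ k := by
    rw [← Real.rpow_add_one hPpos.ne' (k - 1)]; ring_nf
  have hFk : (F ^ (1 / k)) ^ k = F := by
    rw [← Real.rpow_mul hF.le, one_div, inv_mul_cancel₀ hk, Real.rpow_one]
  have hF1 : F ^ (1 / k) = F ^ (1 / k - 1) * F := by
    rw [← Real.rpow_add_one hFne]; ring_nf
  simp only [ContinuousLinearMap.smul_apply, hLF, ContinuousLinearMap.sub_apply,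
    ContinuousLinearMap.comp_apply, ContinuousLinearMap.coe_snd', hA, hB,
    hDφsplit, smul_eq_mul, ← hAdef]
  rw [← hE, ← ha, ← hPdef]
  rw [hFk, hF1]
  have hkk : k * k⁻¹ = 1 := mul_inv_cancel₀ hk
  linear_combination (F ^ (1 / k - 1) * P ^ (k - 1) * P ^ k * A
      + F ^ (1 / k - 1) * P ^ (k - 1) * B
      + ε * E * F ^ (1 / k - 1) * lam) * hkk
    + (F ^ (1 / k - 1) * P ^ (k - 1)) * hsol'
    - (lam * F ^ (1 / k - 1)) * hPk
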